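/- Let (V_N) be a universal system and let N ≥ 2. Let V be a subobject of V_N that is not contained in V_{N−1}, set V' := V ∩ V_{N−1}, and assume that the quotient V/V' is isomorphic to 𝟙. Then the short exact sequence 0 → V' → V → 𝟙 → 0 does not split. -/

import Mathlib

/-!
Formalization of results from the appendix "Universal objects of unipotent Tannakian
categories" of K. Sakugawa, "On the infinite Frobenius action on de Rham fundamental
groups of affine curves".

Setting: `K` is a field of characteristic zero, `C` is a `K`-linear abelian category
with a fixed object `e` (the unit object `𝟙` of the unipotent neutral Tannakian
category; only the `K`-linear abelian structure is used), whose endomorphism ring is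
`K` (expressed by the hypothesis that `c ↦ c • 𝟙 e` is a bijection `K → End e`).
-/

open CategoryTheory CategoryTheory.Limits CategoryTheory.Abelian

attribute [local instance] CategoryTheory.Abelian.hasFiniteBiproducts

universe w v u

section Preliminaries

variable {C : Type u} [Category.{v} C] [Abelian C]

/-- `UnipLE e n V` : the object `V` admits a chain of subobjects
`0 = V₀ ⊆ V₁ ⊆ ⋯ ⊆ Vₙ = V` of length `≤ n` whose graded pieces are isomorphic to
finite direct sums of copies of the object `e`, i.e. `V` is unipotent of
unipotency `≤ n` (with respect to the unit object `e`). -/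
inductive UnipLE (e : C) : ℕ → C → Prop
  | zero (V : C) (h : IsZero V) : UnipLE e 0 V
  | step {n : ℕ} {V : C} (W : C) (i : W ⟶ V) (hi : Mono i) (r : ℕ)
      (hW : UnipLE e n W) (h : Nonempty (cokernel i ≅ ⨁ fun _ : Fin r => e)) :
      UnipLE e (n + 1) V

/-- The unipotency of an object: the minimal length of a unipotent filtration. -/
noncomputable def unipotency (e : C) (V : C) : ℕ := sInf {n | UnipLE e n V}

variable (K : Type*) [Field K] [CharZero K] [Linear K C]

section Ext

variable [HasExt.{w} C]

/-- For a `K`-linear abelian category `C`, the Ext-groups are `K`-vector spaces,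
with scalar multiplication given by composition with `c • 𝟙`. -/
noncomputable instance extModule (X Y : C) (n : ℕ) : Module K (Abelian.Ext X Y n) where
  smul c α := (Abelian.Ext.mk₀ (c • 𝟙 X)).comp α (zero_add n)
  one_smul α := by
    show (Abelian.Ext.mk₀ ((1 : K) • 𝟙 X)).comp α (zero_add n) = α
    rw [one_smul, Abelian.Ext.mk₀_id_comp]
  mul_smul c c' α := by
    show (Abelian.Ext.mk₀ ((c * c') • 𝟙 X)).comp α (zero_add n) =
      (Abelian.Ext.mk₀ (c • 𝟙 X)).comp
        ((Abelian.Ext.mk₀ (c' • 𝟙 X)).comp α (zero_add n)) (zero_add n)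
    rw [Abelian.Ext.mk₀_comp_mk₀_assoc,
      show (c • 𝟙 X) ≫ (c' • 𝟙 X) = (c * c') • 𝟙 X by
        rw [CategoryTheory.Linear.smul_comp, Category.id_comp, smul_smul]]
  smul_zero c := by
    show (Abelian.Ext.mk₀ (c • 𝟙 X)).comp (0 : Abelian.Ext X Y n) (zero_add n) = 0
    apply Abelian.Ext.comp_zero
  smul_add c α β := by
    show (Abelian.Ext.mk₀ (c • 𝟙 X)).comp (α + β) (zero_add n) = _
    rw [Abelian.Ext.comp_add]
    rfl
  add_smul c c' α := by
    show (Abelian.Ext.mk₀ ((c + c') • 𝟙 X)).comp α (zero_add n) = _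
    rw [add_smul,
      show (Abelian.Ext.mk₀ (c • 𝟙 X + c' • 𝟙 X) : Abelian.Ext X X 0)
          = Abelian.Ext.mk₀ (c • 𝟙 X) + Abelian.Ext.mk₀ (c' • 𝟙 X) by
        letI := HasDerivedCategory.standard C
        ext
        rw [Abelian.Ext.add_hom, Abelian.Ext.mk₀_hom, Abelian.Ext.mk₀_hom,
          Abelian.Ext.mk₀_hom, Functor.map_add]
        simp [ShiftedHom.mk₀, Preadditive.add_comp],
      Abelian.Ext.add_comp]
    rfl
  zero_smul α := by
    show (Abelian.Ext.mk₀ ((0 : K) • 𝟙 X)).comp α (zero_add n) = 0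
    rw [zero_smul, Abelian.Ext.mk₀_zero, Abelian.Ext.zero_comp]

/-- A *universal system* for the unit object `e`: an inductive system
`V 1 → V 2 → ⋯` in `C` with `V 1 = e` together with, for every `N ≥ 1`, a short exact
sequence `0 → V N → V (N+1) → Ext¹(e, V N) ⊗ e → 0` whose connecting homomorphism
`Ext¹(e, V N) = Hom(e, Ext¹(e, V N) ⊗ e) → Ext¹(e, V N)` (obtained by applying
`Hom(e, -)` to the sequence) is the identity map, the `K`-vector spaces
`Ext¹(e, V N)` being finite-dimensional.

Here the object `T N` plays the role of `Ext¹(e, V N) ⊗ e`: it is equipped with a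
`K`-linear map `coev N : Ext¹(e, V N) →ₗ[K] (e ⟶ T N)` inducing the natural
isomorphism `Hom(T N, W) ≅ Hom_K(Ext¹(e, V N), Hom(e, W))` for every `W` (the field
`tensor_unit`), so that `Hom(e, T N) ≅ Ext¹(e, V N)`.  The identification of the
connecting homomorphism with the identity is the field `connecting`: the pullback of
the `N`-th short exact sequence along the morphism `coev N x : e ⟶ T N` represents
the extension class `x ∈ Ext¹(e, V N)`, i.e. `(mk₀ (coev N x)) ∘ extClass = x`.

(Indexing: the layer `V N` here is the paper's `V_N`, `N ≥ 1`; the paper's short exact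
sequence `0 → V_{N-1} → V_N → Ext¹(𝟙, V_{N-1}) ⊗ 𝟙 → 0` for `N ≥ 2` is the sequence
indexed below by `N - 1 ≥ 1`.) -/
structure UniversalSystem (e : C) where
  V : ℕ → C
  V_one : V 1 = e
  fd : ∀ N, 1 ≤ N → FiniteDimensional K (Abelian.Ext e (V N) 1)
  T : ℕ → C
  coev : ∀ N, Abelian.Ext e (V N) 1 →ₗ[K] (e ⟶ T N)
  tensor_unit : ∀ N, 1 ≤ N → ∀ W : C,
    Function.Bijective fun g : T N ⟶ W =>
      (CategoryTheory.Linear.rightComp K e g).comp (coev N)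
  ι : ∀ N, V N ⟶ V (N + 1)
  π : ∀ N, V (N + 1) ⟶ T N
  zero : ∀ N, ι N ≫ π N = 0
  shortExact : ∀ N, 1 ≤ N → (ShortComplex.mk (ι N) (π N) (zero N)).ShortExact
  connecting : ∀ N (hN : 1 ≤ N) (x : Abelian.Ext e (V N) 1),
    (Abelian.Ext.mk₀ (coev N x)).comp (shortExact N hN).extClass (zero_add 1) = x

end Ext

end Preliminaries

/-- Auxiliary: the coevaluation map of a universal system is surjective, i.e. every
morphism `e ⟶ T n` is of the form `coev n x`. -/
lemma coev_surjective
    {K : Type*} [Field K] [CharZero K]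
    {C : Type u} [Category.{v} C] [Abelian C] [CategoryTheory.Linear K C] [HasExt.{w} C]
    (e : C)
    (hEnd : Function.Bijective fun c : K => c • 𝟙 e)
    (S : UniversalSystem K e)
    (n : ℕ) (hn : 1 ≤ n) :
    Function.Surjective (S.coev n) := by
  haveI := S.fd n hn
  set E := Abelian.Ext e (S.V n) 1 with hE
  let b : Module.Basis (Fin (Module.finrank K E)) K E := Module.finBasis K E
  set d := Module.finrank K E
  have hp : ∀ i : Fin d, ∃ p : S.T n ⟶ e,
      (CategoryTheory.Linear.rightComp K e p).comp (S.coev n)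
        = (LinearMap.toSpanSingleton K (e ⟶ e) (𝟙 e)).comp (b.coord i) :=
    fun i => (S.tensor_unit n hn e).surjective _
  choose p hp using hp
  have hp' : ∀ (i : Fin d) (y : E), S.coev n y ≫ p i = b.repr y i • 𝟙 e := by
    intro i y
    have := LinearMap.congr_fun (hp i) y
    simpa [LinearMap.toSpanSingleton, Module.Basis.coord_apply] using this
  let g : S.T n ⟶ ⨁ (fun _ : Fin d => e) := biproduct.lift p
  let h : (⨁ (fun _ : Fin d => e)) ⟶ S.T n := biproduct.desc (fun i => S.coev n (b i))
  have hsum : ∀ y : E, S.coev n y ≫ (g ≫ h) = S.coev n y := by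
    intro y
    have : g ≫ h = ∑ i : Fin d, p i ≫ S.coev n (b i) := biproduct.lift_desc
    rw [this, Preadditive.comp_sum]
    have : ∀ i : Fin d, S.coev n y ≫ (p i ≫ S.coev n (b i))
        = S.coev n (b.repr y i • b i) := by
      intro i
      rw [← Category.assoc, hp' i y, CategoryTheory.Linear.smul_comp, Category.id_comp,
        map_smul]
    rw [Finset.sum_congr rfl fun i _ => this i, ← map_sum, b.sum_repr y]
  have hgh : g ≫ h = 𝟙 (S.T n) := by
    apply (S.tensor_unit n hn (S.T n)).injective
    refine LinearMap.ext fun y => ?_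
    simp only [LinearMap.coe_comp, Function.comp_apply, CategoryTheory.Linear.rightComp_apply]
    rw [hsum y, Category.comp_id]
  intro f
  have hc : ∀ i : Fin d, ∃ c : K, c • 𝟙 e = f ≫ p i := fun i => hEnd.surjective _
  choose c hc using hc
  refine ⟨∑ i : Fin d, c i • b i, ?_⟩
  have : f = f ≫ (g ≫ h) := by rw [hgh, Category.comp_id]
  rw [map_sum]
  rw [this, show g ≫ h = ∑ i : Fin d, p i ≫ S.coev n (b i) from biproduct.lift_desc,
    Preadditive.comp_sum]
  refine Finset.sum_congr rfl fun i _ => ?_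
  rw [map_smul, ← Category.assoc, ← hc i, CategoryTheory.Linear.smul_comp, Category.id_comp]

/-- **Non-splitting of subextensions of the universal extensions.**
Let `(V_N)` be a universal system and `N ≥ 2` (here `N = n + 1` with `n ≥ 1`).  Let
`V` be a subobject of `V_N` (given by a monomorphism `m : V ⟶ V (n+1)`) which is not
contained in `V_{N-1} = V n`, let `V' := V ∩ V_{N-1}` (the pullback of `m` and
`ι n`), and assume that the quotient `V/V'` (the cokernel of `V' ⟶ V`) is isomorphic
to `e` via `φ`.  Then the short exact sequence `0 → V' → V → e → 0` does not split:
the epimorphism `V ⟶ e` admits no section. -/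
theorem statement1
    {K : Type*} [Field K] [CharZero K]
    {C : Type u} [Category.{v} C] [Abelian C] [CategoryTheory.Linear K C] [HasExt.{w} C]
    (e : C)
    (hEnd : Function.Bijective fun c : K => c • 𝟙 e)
    (hUnip : ∀ V : C, ∃ n, UnipLE e n V)
    (S : UniversalSystem K e)
    (n : ℕ) (hn : 1 ≤ n)
    (V : C) (m : V ⟶ S.V (n + 1)) (hm : Mono m)
    (hnot : ¬ ∃ g : V ⟶ S.V n, g ≫ S.ι n = m)
    (φ : cokernel (pullback.fst m (S.ι n)) ≅ e) :
    ¬ ∃ s : e ⟶ V, s ≫ (cokernel.π (pullback.fst m (S.ι n)) ≫ φ.hom) = 𝟙 e := by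
  rintro ⟨s, hs⟩
  -- The composite `V ⟶ V (n+1) ⟶ T n` kills `V' = V ∩ V n`, hence factors through
  -- the cokernel `V/V' ≅ e`.
  have h0 : pullback.fst m (S.ι n) ≫ (m ≫ S.π n) = 0 := by
    rw [← Category.assoc, pullback.condition, Category.assoc, S.zero, comp_zero]
  set f₀ : cokernel (pullback.fst m (S.ι n)) ⟶ S.T n :=
    cokernel.desc _ (m ≫ S.π n) h0 with hf₀def
  have hf₀ : cokernel.π (pullback.fst m (S.ι n)) ≫ f₀ = m ≫ S.π n :=
    cokernel.π_desc _ _ _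
  set f : e ⟶ S.T n := φ.inv ≫ f₀ with hfdef
  have hfact : cokernel.π (pullback.fst m (S.ι n)) ≫ f₀
      = (cokernel.π (pullback.fst m (S.ι n)) ≫ φ.hom) ≫ f := by
    rw [hfdef]; simp
  have hsc : s ≫ cokernel.π (pullback.fst m (S.ι n)) = φ.inv := by
    calc s ≫ cokernel.π (pullback.fst m (S.ι n))
        = (s ≫ cokernel.π (pullback.fst m (S.ι n)) ≫ φ.hom) ≫ φ.inv := by simp
      _ = φ.inv := by rw [hs, Category.id_comp]
  -- Composing with the section `s` shows `s ≫ m` is a lift of `f` through `π n`.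
  have hsf : (s ≫ m) ≫ S.π n = f := by
    rw [Category.assoc, ← hf₀, ← Category.assoc, hsc, hfdef]
  -- Hence the connecting image of `f` vanishes.
  have hδ : (Abelian.Ext.mk₀ f).comp (S.shortExact n hn).extClass (zero_add 1) = 0 := by
    rw [← hsf, ← Abelian.Ext.mk₀_comp_mk₀, Abelian.Ext.comp_assoc_of_second_deg_zero,
      (S.shortExact n hn).comp_extClass, Abelian.Ext.comp_zero]
  -- By surjectivity of `coev` and the `connecting` axiom, `f = 0`.
  obtain ⟨x, hx⟩ := coev_surjective e hEnd S n hn f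
  have hx0 : x = 0 := by
    have := S.connecting n hn x
    rw [hx, hδ] at this
    exact this.symm
  have hf0 : f = 0 := by rw [← hx, hx0, map_zero]
  -- Therefore `m ≫ π n = 0`, so `m` factors through `ι n`, contradicting `hnot`.
  have hmπ : m ≫ S.π n = 0 := by
    rw [← hf₀, hfact, hf0, comp_zero]
  haveI := (S.shortExact n hn).mono_f
  exact hnot ⟨(S.shortExact n hn).exact.lift m hmπ,
    (S.shortExact n hn).exact.lift_f m hmπ⟩
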